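/- arXiv:1508.02777 — 5 statements merged into one kernel-verified Lean document; each statement's English description precedes it below -/
import Mathlib

section
/- Let S be a quadratic algebra over a Dedekind domain R, and let I be a fractional ideal of S whose associated quadratic form φ : I → a⁻¹·Λ²I (given by ω ↦ ω ∧ ξω) is primitive, i.e. does not factor through a proper sublattice of a⁻¹·Λ²I. Then I is invertible: there exists a fractional ideal J of S with IJ = S. -/
open scoped nonZeroDivisors

/-- The coordinate of `x ∧ y` in `Λ²_K S_K`, with respect to a `K`-basis `b` of the
two-dimensional algebra `S_K`, normalized so that `α(b 0 ∧ b 1) = 1`.  When `b 0 = 1` and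
`b 1 = ξ` this is the orientation `α` of the paper applied to `x ∧ y`. -/
noncomputable def wedgeC {K A : Type*} [Field K] [CommRing A] [Algebra K A]
    (b : Module.Basis (Fin 2) K A) (x y : A) : K :=
  b.repr x 0 * b.repr y 1 - b.repr x 1 * b.repr y 0

/-- `α(Λ² I)`: the `R`-submodule of `K` generated by all `α(x ∧ y)` for `x, y ∈ I`.  For a
rank-2 lattice `I` in `S_K` this realizes (the image under the orientation of) its top
exterior power. -/
noncomputable def wedgeIdeal (R : Type*) {K A : Type*} [CommRing R] [Field K] [Algebra R K]
    [CommRing A] [Algebra K A] [Algebra R A] (b : Module.Basis (Fin 2) K A) (I : Submodule R A) :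
    Submodule R K :=
  Submodule.span R {k : K | ∃ x ∈ I, ∃ y ∈ I, wedgeC b x y = k}

/-- The image (as an `R`-submodule of `K`) of the quadratic form `ω ↦ α(ω ∧ ξω)`
associated to an ideal `I`, where `ξ = b 1`. -/
noncomputable def formIdeal (R : Type*) {K A : Type*} [CommRing R] [Field K] [Algebra R K]
    [CommRing A] [Algebra K A] [Algebra R A] (b : Module.Basis (Fin 2) K A) (I : Submodule R A) :
    Submodule R K :=
  Submodule.span R {k : K | ∃ x ∈ I, wedgeC b x (b 1 * x) = k}


section Aux
variable {K A : Type*} [Field K] [CommRing A] [Algebra K A]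
variable (b : Module.Basis (Fin 2) K A)

noncomputable def tC : K := b.repr (b 1 * b 1) 1
noncomputable def nC : K := b.repr (b 1 * b 1) 0
noncomputable def cC (x y : A) : K :=
  b.repr x 0 * b.repr y 0 + tC b * (b.repr x 0 * b.repr y 1) - nC b * (b.repr x 1 * b.repr y 1)
noncomputable def sigma (x : A) : A :=
  (b.repr x 0 + tC b * b.repr x 1) • b 0 + (-(b.repr x 1)) • b 1

lemma repr_combo0 (p q : K) : b.repr (p • b 0 + q • b 1) 0 = p := by
  simp [map_add, map_smul, Module.Basis.repr_self, Finsupp.single_apply]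

lemma repr_combo1 (p q : K) : b.repr (p • b 0 + q • b 1) 1 = q := by
  simp [map_add, map_smul, Module.Basis.repr_self, Finsupp.single_apply]

lemma basis_expand (x : A) : x = b.repr x 0 • b 0 + b.repr x 1 • b 1 := by
  have := b.sum_repr x
  rw [Fin.sum_univ_two] at this
  exact this.symm

lemma combo_congr {p q p' q' : K} (h : p = p') (h' : q = q') :
    p • b 0 + q • b 1 = p' • b 0 + q' • b 1 := by rw [h, h']

lemma wedgeC_smul_left (s : K) (x y : A) : wedgeC b (s • x) y = s * wedgeC b x y := by
  simp [wedgeC]; ring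

lemma wedgeC_add_left (x x' y : A) : wedgeC b (x + x') y = wedgeC b x y + wedgeC b x' y := by
  simp [wedgeC]; ring

lemma wedgeC_smul_right (s : K) (x y : A) : wedgeC b x (s • y) = s * wedgeC b x y := by
  simp [wedgeC]; ring

lemma wedgeC_add_right (x y y' : A) : wedgeC b x (y + y') = wedgeC b x y + wedgeC b x y' := by
  simp [wedgeC]; ring

lemma wedgeC_zero_left (y : A) : wedgeC b 0 y = 0 := by simp [wedgeC]

lemma wedgeC_zero_right (x : A) : wedgeC b x 0 = 0 := by simp [wedgeC]

lemma wedgeC_self (x : A) : wedgeC b x x = 0 := by simp [wedgeC, mul_comm]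

lemma mul_expand (hb0 : b 0 = 1) (p q p' q' : K) :
    (p • b 0 + q • b 1) * (p' • b 0 + q' • b 1) =
      (p * p' + (q * q') * nC b) • b 0 +
      (p * q' + q * p' + (q * q') * tC b) • b 1 := by
  have hξ : b 1 * b 1 = nC b • b 0 + tC b • b 1 := by
    have := b.sum_repr (b 1 * b 1)
    rw [Fin.sum_univ_two] at this
    exact this.symm
  rw [hb0]
  rw [hb0] at hξ
  simp only [Algebra.smul_def, mul_one, map_add, map_mul] at *
  linear_combination (algebraMap K A q * algebraMap K A q') * hξ

lemma mul_coord0 (hb0 : b 0 = 1) (x y : A) :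
    b.repr (x * y) 0 = b.repr x 0 * b.repr y 0 + nC b * (b.repr x 1 * b.repr y 1) := by
  conv_lhs => rw [basis_expand b x, basis_expand b y, mul_expand b hb0, repr_combo0]
  ring

lemma mul_coord1 (hb0 : b 0 = 1) (x y : A) :
    b.repr (x * y) 1 = b.repr x 0 * b.repr y 1 + b.repr x 1 * b.repr y 0
      + tC b * (b.repr x 1 * b.repr y 1) := by
  conv_lhs => rw [basis_expand b x, basis_expand b y, mul_expand b hb0, repr_combo1]
  ring

lemma idA (hb0 : b 0 = 1) (x y : A) :
    x * sigma b y = cC b x y • b 0 + (-(wedgeC b x y)) • b 1 := by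
  conv_lhs => rw [basis_expand b x]
  rw [sigma, mul_expand b hb0]
  exact combo_congr b (by rw [cC]; ring) (by rw [wedgeC]; ring)

lemma idB (hb0 : b 0 = 1) (x : A) : wedgeC b x (b 1 * x) = cC b x x := by
  rw [wedgeC, cC, mul_coord0 b hb0 (b 1) x, mul_coord1 b hb0 (b 1) x]
  simp [Module.Basis.repr_self]
  ring

lemma idC (hb0 : b 0 = 1) (x y : A) :
    cC b x y = tC b * wedgeC b x y - wedgeC b (b 1 * x) y := by
  rw [cC, wedgeC, wedgeC, mul_coord0 b hb0 (b 1) x, mul_coord1 b hb0 (b 1) x]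
  simp [Module.Basis.repr_self]
  ring

noncomputable def sigmaK : A →ₗ[K] A where
  toFun := sigma b
  map_add' x y := by simp only [sigma, map_add, Finsupp.add_apply]; module
  map_smul' s x := by simp only [sigma, map_smul, Finsupp.smul_apply, smul_eq_mul,
    RingHom.id_apply]; module

@[simp] lemma sigmaK_apply (x : A) : sigmaK b x = sigma b x := rfl

end Aux

section Iota
variable (R : Type*) {K A : Type*} [CommRing R] [Field K] [Algebra R K]
  [CommRing A] [Algebra K A] [Algebra R A] [IsScalarTower R K A]
variable (b : Module.Basis (Fin 2) K A)

noncomputable def iota : K →ₗ[R] A := (LinearMap.toSpanSingleton K A (b 0)).restrictScalars R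
noncomputable def iotaXi : K →ₗ[R] A := (LinearMap.toSpanSingleton K A (b 1)).restrictScalars R

@[simp] lemma iota_apply (k : K) : iota R b k = k • b 0 := rfl
@[simp] lemma iotaXi_apply (k : K) : iotaXi R b k = k • b 1 := rfl

omit [Algebra K A] [IsScalarTower R K A] in
lemma map_mul_map (f g h : K →ₗ[R] A) (hmul : ∀ k k' : K, f k * g k' = h (k * k'))
    (M N : Submodule R K) :
    Submodule.map f M * Submodule.map g N = Submodule.map h (M * N) := by
  apply le_antisymm
  · rw [Submodule.mul_le]
    rintro _ ⟨m, hm, rfl⟩ _ ⟨n, hn, rfl⟩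
    rw [hmul]
    exact Submodule.mem_map_of_mem (Submodule.mul_mem_mul hm hn)
  · rw [Submodule.map_le_iff_le_comap]
    intro z hz
    refine Submodule.mul_induction_on hz (fun m hm n hn => ?_) (fun x y hx hy => ?_)
    · simp only [Submodule.mem_comap]
      rw [← hmul]
      exact Submodule.mul_mem_mul (Submodule.mem_map_of_mem hm) (Submodule.mem_map_of_mem hn)
    · simp only [Submodule.mem_comap, map_add]
      exact Submodule.add_mem _ hx hy

lemma map_iota_one (hb0 : b 0 = 1) :
    Submodule.map (iota R b) (1 : Submodule R K) = LinearMap.range (Algebra.linearMap R A) := by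
  ext z
  constructor
  · rintro ⟨k, hk, rfl⟩
    obtain ⟨r, rfl⟩ := Submodule.mem_one.mp hk
    exact ⟨r, by rw [Algebra.linearMap_apply, IsScalarTower.algebraMap_apply R K A,
      iota_apply, hb0, Algebra.smul_def, mul_one]⟩
  · rintro ⟨r, rfl⟩
    refine ⟨algebraMap R K r, Submodule.mem_one.mpr ⟨r, rfl⟩, ?_⟩
    rw [Algebra.linearMap_apply, IsScalarTower.algebraMap_apply R K A,
      iota_apply, hb0, Algebra.smul_def, mul_one]

end Iota
/-- Let `S = R ⊕ aξ` be an oriented quadratic algebra over a Dedekind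
domain `R`, realized inside the two-dimensional `K`-algebra `A = S_K` with basis
`{1, ξ}`, and let `I` be a fractional ideal of `S` whose associated quadratic form
`ω ↦ ω ∧ ξω` is primitive (its image is all of `a⁻¹·Λ²I`).  Then `I` is invertible:
there is a fractional ideal `J` with `IJ = S`. -/
theorem stmt6 (R : Type*) [CommRing R] [IsDedekindDomain R]
    (K : Type*) [Field K] [Algebra R K] [IsFractionRing R K]
    (A : Type*) [CommRing A] [Algebra K A] [Algebra R A] [IsScalarTower R K A]
    (b : Module.Basis (Fin 2) K A) (hb0 : b 0 = 1)
    (a : FractionalIdeal R⁰ K) (ha : a ≠ 0)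
    (S : Subalgebra R A)
    (hS : Subalgebra.toSubmodule S =
      LinearMap.range (Algebra.linearMap R A) ⊔
        Submodule.map ((LinearMap.toSpanSingleton K A (b 1)).restrictScalars R)
          (a : Submodule R K))
    (I : Submodule R A) (hfg : I.FG)
    (hstab : ∀ s ∈ S, ∀ x ∈ I, s * x ∈ I)
    (hspan : Submodule.span K (I : Set A) = ⊤)
    (hprim : formIdeal R b I = ((a⁻¹ : FractionalIdeal R⁰ K) : Submodule R K) *
      wedgeIdeal R b I) :
    ∃ J : Submodule R A, (∀ s ∈ S, ∀ x ∈ J, s * x ∈ J) ∧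
      I * J = Subalgebra.toSubmodule S := by
  classical
  -- membership of `s • ξ` in `S` for `s ∈ a`
  have hmemS : ∀ s : K, s ∈ (a : Submodule R K) → s • b 1 ∈ S := by
    intro s hs
    rw [← Subalgebra.mem_toSubmodule, hS]
    exact Submodule.mem_sup_right ⟨s, hs, rfl⟩
  -- the second coordinate of any element of `S` lies in `a`
  have hcoord : ∀ z ∈ S, b.repr z 1 ∈ (a : Submodule R K) := by
    intro z hz
    rw [← Subalgebra.mem_toSubmodule, hS] at hz
    rcases Submodule.mem_sup.mp hz with ⟨z0, hz0, z1, hz1, rfl⟩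
    rcases hz0 with ⟨r, rfl⟩
    rcases hz1 with ⟨w, hw, rfl⟩
    have h0 : (Algebra.linearMap R A) r = (algebraMap R K r) • b 0 := by
      rw [Algebra.linearMap_apply, IsScalarTower.algebraMap_apply R K A,
        hb0, Algebra.smul_def, mul_one]
    have h1 : ((LinearMap.toSpanSingleton K A (b 1)).restrictScalars R) w = w • b 1 := rfl
    rw [h0, h1, repr_combo1]
    exact hw
  -- `a·a·t ⊆ a`
  have hsst : ∀ s ∈ (a : Submodule R K), ∀ s' ∈ (a : Submodule R K),
      s * s' * tC b ∈ (a : Submodule R K) := by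
    intro s hs s' hs'
    have hz : (s • b 1) * (s' • b 1) ∈ S := S.mul_mem (hmemS s hs) (hmemS s' hs')
    have e1 : s • b 1 = (0:K) • b 0 + s • b 1 := by rw [zero_smul, zero_add]
    have e2 : s' • b 1 = (0:K) • b 0 + s' • b 1 := by rw [zero_smul, zero_add]
    have hz' := hcoord _ hz
    rw [e1, e2, mul_expand b hb0, repr_combo1] at hz'
    simpa using hz'
  have hia : (a⁻¹ * a : FractionalIdeal R⁰ K) = 1 := by
    rw [mul_comm]; exact mul_inv_cancel₀ ha
  have hiacoe : ((a⁻¹ : FractionalIdeal R⁰ K) : Submodule R K) * (a : Submodule R K)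
      = (1 : Submodule R K) := by
    rw [← FractionalIdeal.coe_mul, hia, FractionalIdeal.coe_one]
  -- key localization-free trick: if `a·k ⊆ M` then `k ∈ a⁻¹·M`
  have hainv : ∀ (M : Submodule R K) (k : K), (∀ s ∈ (a : Submodule R K), s * k ∈ M) →
      k ∈ ((a⁻¹ : FractionalIdeal R⁰ K) : Submodule R K) * M := by
    intro M k h
    have h1 : (1 : K) ∈ ((a⁻¹ : FractionalIdeal R⁰ K) : Submodule R K) * (a : Submodule R K) := by
      rw [hiacoe]; exact Submodule.mem_one.mpr ⟨1, map_one _⟩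
    have key : ∀ z ∈ ((a⁻¹ : FractionalIdeal R⁰ K) : Submodule R K) * (a : Submodule R K),
        z * k ∈ ((a⁻¹ : FractionalIdeal R⁰ K) : Submodule R K) * M := by
      intro z hz
      refine Submodule.mul_induction_on hz (fun u hu s hs => ?_) (fun x y hx hy => ?_)
      · rw [mul_assoc]
        exact Submodule.mul_mem_mul hu (h s hs)
      · rw [add_mul]
        exact Submodule.add_mem _ hx hy
    simpa using key 1 h1
  -- `a·t ⊆ R`
  have htmem : ∀ s ∈ (a : Submodule R K), s * tC b ∈ (1 : Submodule R K) := by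
    intro s hs
    have h := hainv (a : Submodule R K) (s * tC b) (fun s' hs' => by
      have h1 := hsst s hs s' hs'
      rwa [show s * s' * tC b = s' * (s * tC b) by ring] at h1)
    rwa [hiacoe] at h
  -- membership of wedges
  have hwedge : ∀ x ∈ I, ∀ y ∈ I, wedgeC b x y ∈ wedgeIdeal R b I :=
    fun x hx y hy => Submodule.subset_span ⟨x, hx, y, hy, rfl⟩
  -- `a · c(x,y) ⊆ W`
  have hsc : ∀ s ∈ (a : Submodule R K), ∀ x ∈ I, ∀ y ∈ I,
      s * cC b x y ∈ wedgeIdeal R b I := by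
    intro s hs x hx y hy
    rw [idC b hb0 x y]
    obtain ⟨r, hr⟩ := Submodule.mem_one.mp (htmem s hs)
    have h1 : s * (tC b * wedgeC b x y) = r • wedgeC b x y := by
      rw [Algebra.smul_def, hr]; ring
    have h2 : s * wedgeC b (b 1 * x) y = wedgeC b ((s • b 1) * x) y := by
      rw [smul_mul_assoc, wedgeC_smul_left]
    rw [mul_sub, h1, h2]
    exact sub_mem ((wedgeIdeal R b I).smul_mem r (hwedge x hx y hy))
      (hwedge _ (hstab _ (hmemS s hs) x hx) y hy)
  -- `c(x,y) ∈ N`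
  have hcN : ∀ x ∈ I, ∀ y ∈ I, cC b x y ∈ formIdeal R b I := by
    intro x hx y hy
    rw [hprim]
    exact hainv _ _ (fun s hs => hsc s hs x hx y hy)
  -- the conjugated module
  set σI : Submodule R A := Submodule.map ((sigmaK b).restrictScalars R) I with hσI
  have hσmem : ∀ y ∈ I, sigma b y ∈ σI := fun y hy => ⟨y, hy, rfl⟩
  -- `ι(N) ⊆ I·σ(I)`
  have hNle : Submodule.map (iota R b) (formIdeal R b I) ≤ I * σI := by
    rw [Submodule.map_le_iff_le_comap]
    intro k hk
    refine Submodule.span_induction (fun k hk => ?_) ?_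
      (fun u v _ _ hu' hv' => ?_) (fun r u _ hu' => ?_) hk
    · obtain ⟨x, hx, rfl⟩ := hk
      simp only [Submodule.mem_comap, iota_apply]
      rw [idB b hb0 x]
      have hh := idA b hb0 x x
      rw [wedgeC_self, neg_zero, zero_smul, add_zero] at hh
      rw [← hh]
      exact Submodule.mul_mem_mul hx (hσmem x hx)
    · simp only [Submodule.mem_comap, map_zero]
      exact Submodule.zero_mem _
    · simp only [Submodule.mem_comap, map_add] at *
      exact Submodule.add_mem _ hu' hv'
    · simp only [Submodule.mem_comap, map_smul] at *
      exact Submodule.smul_mem _ r hu'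
  -- `ιξ(W) ⊆ I·σ(I)`
  have hWle : Submodule.map (iotaXi R b) (wedgeIdeal R b I) ≤ I * σI := by
    rw [Submodule.map_le_iff_le_comap]
    intro k hk
    refine Submodule.span_induction (fun k hk => ?_) ?_
      (fun u v _ _ hu' hv' => ?_) (fun r u _ hu' => ?_) hk
    · obtain ⟨x, hx, y, hy, rfl⟩ := hk
      simp only [Submodule.mem_comap, iotaXi_apply]
      have hA := idA b hb0 x y
      have he : wedgeC b x y • b 1 = cC b x y • b 0 - x * sigma b y := by
        rw [hA]; module
      rw [he]
      refine sub_mem ?_ (Submodule.mul_mem_mul hx (hσmem y hy))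
      exact hNle ⟨cC b x y, hcN x hx y hy, rfl⟩
    · simp only [Submodule.mem_comap, map_zero]
      exact Submodule.zero_mem _
    · simp only [Submodule.mem_comap, map_add] at *
      exact Submodule.add_mem _ hu' hv'
    · simp only [Submodule.mem_comap, map_smul] at *
      exact Submodule.smul_mem _ r hu'
  -- `I·σ(I) = ι(N) ⊔ ιξ(W)`
  have hT : I * σI = Submodule.map (iota R b) (formIdeal R b I) ⊔
      Submodule.map (iotaXi R b) (wedgeIdeal R b I) := by
    apply le_antisymm
    · rw [Submodule.mul_le]
      rintro x hx _ ⟨y, hy, rfl⟩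
      have h1 : ((sigmaK b).restrictScalars R) y = sigma b y := rfl
      rw [h1, idA b hb0 x y]
      exact Submodule.add_mem _
        (Submodule.mem_sup_left ⟨cC b x y, hcN x hx y hy, rfl⟩)
        (Submodule.mem_sup_right ⟨-(wedgeC b x y), neg_mem (hwedge x hx y hy), rfl⟩)
    · exact sup_le hNle hWle
  -- `W` is finitely generated
  have hWfg : (wedgeIdeal R b I).FG := by
    obtain ⟨s, hsI⟩ := hfg
    refine Submodule.fg_def.mpr ⟨(fun p : A × A => wedgeC b p.1 p.2) '' ((s : Set A) ×ˢ (s : Set A)),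
      ((s.finite_toSet.prod s.finite_toSet).image _), le_antisymm ?_ ?_⟩
    · rw [Submodule.span_le]
      rintro _ ⟨⟨x, y⟩, ⟨hx, hy⟩, rfl⟩
      exact hwedge x (hsI ▸ Submodule.subset_span hx) y (hsI ▸ Submodule.subset_span hy)
    · rw [show wedgeIdeal R b I =
        Submodule.span R {k : K | ∃ x ∈ I, ∃ y ∈ I, wedgeC b x y = k} from rfl,
        Submodule.span_le]
      rintro _ ⟨x, hx, y, hy, rfl⟩
      set G := (fun p : A × A => wedgeC b p.1 p.2) '' ((s : Set A) ×ˢ (s : Set A)) with hG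
      have inner : ∀ g ∈ (s : Set A), ∀ y' ∈ I, wedgeC b g y' ∈ Submodule.span R G := by
        intro g hg y' hy'
        rw [← hsI] at hy'
        refine Submodule.span_induction (fun z hz => ?_) ?_
          (fun u v _ _ hu' hv' => ?_) (fun r u _ hu' => ?_) hy'
        · exact Submodule.subset_span ⟨(g, z), ⟨hg, hz⟩, rfl⟩
        · rw [wedgeC_zero_right]
          exact Submodule.zero_mem _
        · rw [wedgeC_add_right]
          exact Submodule.add_mem _ hu' hv'
        · rw [← algebraMap_smul K r u, wedgeC_smul_right, ← Algebra.smul_def]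
          exact Submodule.smul_mem _ r hu'
      have hxI := hx
      rw [← hsI] at hxI
      refine Submodule.span_induction (fun z hz => ?_) ?_
        (fun u v hu hv hu' hv' => ?_) (fun r u hu hu' => ?_) hxI
      · exact inner z hz y hy
      · rw [wedgeC_zero_left]
        exact Submodule.zero_mem _
      · rw [wedgeC_add_left]
        exact Submodule.add_mem _ hu' hv'
      · rw [← algebraMap_smul K r u, wedgeC_smul_left, ← Algebra.smul_def]
        exact Submodule.smul_mem _ r hu'
  -- there is a nonzero wedge
  have hex : ∃ x ∈ I, ∃ y ∈ I, wedgeC b x y ≠ 0 := by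
    by_contra hcon
    push_neg at hcon
    have h2 : ∀ y ∈ Submodule.span K (I : Set A), ∀ x ∈ I, wedgeC b x y = 0 := by
      intro y hy
      refine Submodule.span_induction (fun z hz x hx => hcon x hx z hz) (fun x _ => ?_)
        (fun u v _ _ hu' hv' x hx => ?_) (fun k u _ hu' x hx => ?_) hy
      · exact wedgeC_zero_right b x
      · rw [wedgeC_add_right, hu' x hx, hv' x hx, add_zero]
      · rw [wedgeC_smul_right, hu' x hx, mul_zero]
    have h3 : ∀ y ∈ Submodule.span K (I : Set A), ∀ x ∈ Submodule.span K (I : Set A),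
        wedgeC b x y = 0 := by
      intro y hy x hx
      refine Submodule.span_induction (fun z hz => h2 y hy z hz) ?_
        (fun u v _ _ hu' hv' => ?_) (fun k u _ hu' => ?_) hx
      · exact wedgeC_zero_left b y
      · rw [wedgeC_add_left, hu', hv', add_zero]
      · rw [wedgeC_smul_left, hu', mul_zero]
    have h4 : wedgeC b (b 0) (b 1) = 0 := by
      refine h3 (b 1) ?_ (b 0) ?_ <;> rw [hspan] <;> exact Submodule.mem_top
    rw [wedgeC] at h4
    simp [Module.Basis.repr_self] at h4
  -- the norm ideal as a fractional ideal
  set Wf : FractionalIdeal R⁰ K := ⟨wedgeIdeal R b I, FractionalIdeal.isFractional_of_fg hWfg⟩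
    with hWf
  have hWfcoe : (Wf : Submodule R K) = wedgeIdeal R b I := rfl
  set Nf : FractionalIdeal R⁰ K := a⁻¹ * Wf with hNf
  have hNfcoe : (Nf : Submodule R K) = formIdeal R b I := by
    rw [hNf, FractionalIdeal.coe_mul, hWfcoe, ← hprim]
  have haN : (a : Submodule R K) * formIdeal R b I = wedgeIdeal R b I := by
    rw [hprim, ← mul_assoc, ← FractionalIdeal.coe_mul, mul_inv_cancel₀ ha,
      FractionalIdeal.coe_one, one_mul]
  have hNf0 : Nf ≠ 0 := by
    obtain ⟨x, hx, y, hy, hne⟩ := hex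
    intro h0
    apply hne
    have hNbot : formIdeal R b I = ⊥ := by
      rw [← hNfcoe, h0, FractionalIdeal.coe_zero]
    have hWbot : wedgeIdeal R b I = ⊥ := by
      rw [← haN, hNbot, Submodule.mul_bot]
    have hm := hwedge x hx y hy
    rw [hWbot, Submodule.mem_bot] at hm
    exact hm
  have hNN' : formIdeal R b I * ((Nf⁻¹ : FractionalIdeal R⁰ K) : Submodule R K)
      = (1 : Submodule R K) := by
    rw [← hNfcoe, ← FractionalIdeal.coe_mul, mul_inv_cancel₀ hNf0,
      FractionalIdeal.coe_one]
  have hWN' : wedgeIdeal R b I * ((Nf⁻¹ : FractionalIdeal R⁰ K) : Submodule R K)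
      = (a : Submodule R K) := by
    rw [← haN, mul_assoc, hNN', Submodule.mul_one]
  -- products of maps
  have hmm1 : Submodule.map (iota R b) (formIdeal R b I) *
      Submodule.map (iota R b) ((Nf⁻¹ : FractionalIdeal R⁰ K) : Submodule R K) =
      Submodule.map (iota R b)
        (formIdeal R b I * ((Nf⁻¹ : FractionalIdeal R⁰ K) : Submodule R K)) := by
    refine map_mul_map R _ _ _ (fun k k' => ?_) _ _
    simp only [iota_apply, hb0, smul_eq_mul, Algebra.smul_def, mul_one, map_mul]
  have hmm2 : Submodule.map (iotaXi R b) (wedgeIdeal R b I) *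
      Submodule.map (iota R b) ((Nf⁻¹ : FractionalIdeal R⁰ K) : Submodule R K) =
      Submodule.map (iotaXi R b)
        (wedgeIdeal R b I * ((Nf⁻¹ : FractionalIdeal R⁰ K) : Submodule R K)) := by
    refine map_mul_map R _ _ _ (fun k k' => ?_) _ _
    simp only [iota_apply, iotaXi_apply, hb0, Algebra.smul_def, mul_one, map_mul]
    ring
  -- the inverse module
  refine ⟨Submodule.map (iota R b) ((Nf⁻¹ : FractionalIdeal R⁰ K) : Submodule R K) * σI *
    Subalgebra.toSubmodule S, ?_, ?_⟩
  · intro s hs x hx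
    refine Submodule.mul_induction_on hx (fun m hm n hn => ?_) (fun u v hu hv => ?_)
    · rw [show s * (m * n) = m * (s * n) by ring]
      exact Submodule.mul_mem_mul hm
        ((Subalgebra.mem_toSubmodule _).mpr (S.mul_mem hs ((Subalgebra.mem_toSubmodule _).mp hn)))
    · rw [mul_add]
      exact Submodule.add_mem _ hu hv
  · rw [show I * (Submodule.map (iota R b) ((Nf⁻¹ : FractionalIdeal R⁰ K) : Submodule R K) * σI *
      Subalgebra.toSubmodule S) =
      ((I * σI) * Submodule.map (iota R b) ((Nf⁻¹ : FractionalIdeal R⁰ K) : Submodule R K)) *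
      Subalgebra.toSubmodule S from by ring]
    rw [hT, Submodule.sup_mul, hmm1, hmm2, hNN', hWN', map_iota_one R b hb0]
    rw [show LinearMap.range (Algebra.linearMap R A) ⊔
      Submodule.map (iotaXi R b) (a : Submodule R K) = Subalgebra.toSubmodule S from hS.symm]
    exact (Subalgebra.isIdempotentElem_toSubmodule S).eq
end

section
/- Let S be a quadratic algebra over a Dedekind domain R, I an invertible fractional ideal of S and J any fractional ideal of S. Then End(IJ) = End(J). -/
open scoped nonZeroDivisors

/-- Let `S` be a quadratic algebra over a Dedekind domain `R` with total
quotient ring `S_K = A`, `I` an invertible fractional ideal of `S` and `J` any fractional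
ideal of `S`.  Then `End(IJ) = End(J)`, where `End(I) = {x ∈ S_K : xI ⊆ I}`. -/
theorem stmt12 (R : Type*) [CommRing R] [IsDedekindDomain R]
    (K : Type*) [Field K] [Algebra R K] [IsFractionRing R K]
    (A : Type*) [CommRing A] [Algebra K A] [Algebra R A] [IsScalarTower R K A]
    (b : Module.Basis (Fin 2) K A) (hb0 : b 0 = 1)
    (a : FractionalIdeal R⁰ K) (ha : a ≠ 0)
    (S : Subalgebra R A)
    (hS : Subalgebra.toSubmodule S =
      LinearMap.range (Algebra.linearMap R A) ⊔
        Submodule.map ((LinearMap.toSpanSingleton K A (b 1)).restrictScalars R)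
          (a : Submodule R K))
    (I J : Submodule R A) (hIfg : I.FG) (hJfg : J.FG)
    (hIstab : ∀ s ∈ S, ∀ x ∈ I, s * x ∈ I)
    (hJstab : ∀ s ∈ S, ∀ x ∈ J, s * x ∈ J)
    (hIspan : Submodule.span K (I : Set A) = ⊤)
    (hJspan : Submodule.span K (J : Set A) = ⊤)
    (hinv : ∃ I', (∀ s ∈ S, ∀ x ∈ I', s * x ∈ I') ∧
      I * I' = Subalgebra.toSubmodule S) :
    ∀ x : A, (∀ y ∈ I * J, x * y ∈ I * J) ↔ (∀ y ∈ J, x * y ∈ J) := by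
  obtain ⟨I', hI'stab, hII'⟩ := hinv
  have hSJ : Subalgebra.toSubmodule S * J = J := by
    apply le_antisymm
    · rw [Submodule.mul_le]; exact hJstab
    · intro j hj
      simpa using Submodule.mul_mem_mul (show (1:A) ∈ Subalgebra.toSubmodule S from S.one_mem) hj
  intro x
  constructor
  · intro h j hj
    have hj' : j ∈ I' * (I * J) := by
      rw [← mul_assoc, mul_comm I' I, hII', hSJ]; exact hj
    have hx : x * j ∈ I' * (I * J) := by
      refine Submodule.mul_induction_on hj' (fun a ha b hb => ?_) (fun y z hy hz => ?_)
      · have h1 : x * b ∈ I * J := h b hb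
        have h2 := Submodule.mul_mem_mul ha h1
        have : a * (x * b) = x * (a * b) := by ring
        rwa [this] at h2
      · have : x * (y + z) = x * y + x * z := by ring
        rw [this]; exact Submodule.add_mem _ hy hz
    rwa [← mul_assoc, mul_comm I' I, hII', hSJ] at hx
  · intro h y hy
    refine Submodule.mul_induction_on hy (fun i hi j hj => ?_) (fun y z hy hz => ?_)
    · have h1 := Submodule.mul_mem_mul hi (h j hj)
      have : i * (x * j) = x * (i * j) := by ring
      rwa [this] at h1
    · have : x * (y + z) = x * y + x * z := by ring
      rw [this]; exact Submodule.add_mem _ hy hz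
end

section
/- If two balanced triples (I₁,I₂,I₃) and (γ₁I₁, I₂, I₃) of fractional ideals of an oriented quadratic algebra S over a Dedekind domain R give rise to the same trilinear map β(x,y,z) = α(1 ∧ xyz), then γ₁ = 1. -/
open scoped nonZeroDivisors

/-- If two balanced triples `(I₁, I₂, I₃)` and `(γ₁I₁, I₂, I₃)` of
fractional ideals of an oriented quadratic algebra `S` over a Dedekind domain `R` give
rise to the same trilinear map `β(x, y, z) = α(1 ∧ xyz)`, then `γ₁ = 1`. -/
theorem stmt13 (R : Type*) [CommRing R] [IsDedekindDomain R]
    (K : Type*) [Field K] [Algebra R K] [IsFractionRing R K]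
    (A : Type*) [CommRing A] [Algebra K A] [Algebra R A] [IsScalarTower R K A]
    (b : Module.Basis (Fin 2) K A) (hb0 : b 0 = 1)
    (a : FractionalIdeal R⁰ K) (ha : a ≠ 0)
    (S : Subalgebra R A)
    (hS : Subalgebra.toSubmodule S =
      LinearMap.range (Algebra.linearMap R A) ⊔
        Submodule.map ((LinearMap.toSpanSingleton K A (b 1)).restrictScalars R)
          (a : Submodule R K))
    (I₁ I₂ I₃ : Submodule R A)
    (hfg : I₁.FG ∧ I₂.FG ∧ I₃.FG)
    (hstab : (∀ s ∈ S, ∀ x ∈ I₁, s * x ∈ I₁) ∧ (∀ s ∈ S, ∀ x ∈ I₂, s * x ∈ I₂) ∧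
      (∀ s ∈ S, ∀ x ∈ I₃, s * x ∈ I₃))
    (hspan : Submodule.span K (I₁ : Set A) = ⊤ ∧ Submodule.span K (I₂ : Set A) = ⊤ ∧
      Submodule.span K (I₃ : Set A) = ⊤)
    (hbal : I₁ * I₂ * I₃ ≤ Subalgebra.toSubmodule S ∧
      wedgeIdeal R b I₁ * wedgeIdeal R b I₂ * wedgeIdeal R b I₃ =
        (a : Submodule R K) * (a : Submodule R K) * (a : Submodule R K))
    (γ : A) (hγ : IsUnit γ)
    (hbal' : Submodule.map (LinearMap.mulLeft R γ) I₁ * I₂ * I₃ ≤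
        Subalgebra.toSubmodule S ∧
      wedgeIdeal R b (Submodule.map (LinearMap.mulLeft R γ) I₁) * wedgeIdeal R b I₂ *
          wedgeIdeal R b I₃ =
        (a : Submodule R K) * (a : Submodule R K) * (a : Submodule R K))
    (hβ : ∀ x ∈ I₁, ∀ y ∈ I₂, ∀ z ∈ I₃,
      wedgeC b 1 (γ * x * y * z) = wedgeC b 1 (x * y * z)) :
    γ = 1 := by
  classical
  -- `wedgeC b 1 w = b.repr w 1`
  have hr1 : b.repr (1 : A) = Finsupp.single 0 1 := by rw [← hb0, b.repr_self]
  have hone : ∀ w : A, wedgeC b 1 w = b.repr w 1 := by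
    intro w
    simp [wedgeC, hr1]
  -- the `K`-linear functional `w ↦ b.repr ((γ - 1) * w) 1`
  let f : A →ₗ[K] K :=
    { toFun := fun w => b.repr ((γ - 1) * w) 1
      map_add' := by intro u v; simp [mul_add]
      map_smul' := by
        intro c v
        simp only [RingHom.id_apply, mul_smul_comm, map_smul, Finsupp.smul_apply,
          smul_eq_mul] }
  have hβ' : ∀ x ∈ I₁, ∀ y ∈ I₂, ∀ z ∈ I₃, f (x * y * z) = 0 := by
    intro x hx y hy z hz
    have h := hβ x hx y hy z hz
    rw [hone, hone] at h
    show b.repr ((γ - 1) * (x * y * z)) 1 = 0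
    have : (γ - 1) * (x * y * z) = γ * x * y * z - x * y * z := by ring
    rw [this, map_sub, Finsupp.sub_apply, h, sub_self]
  -- extend by `K`-linearity in the third variable
  have h3 : ∀ x ∈ I₁, ∀ y ∈ I₂, ∀ w : A, f (x * y * w) = 0 := by
    intro x hx y hy w
    have hw : w ∈ Submodule.span K (I₃ : Set A) := by
      rw [hspan.2.2]; exact Submodule.mem_top
    induction hw using Submodule.span_induction with
    | mem z hz => exact hβ' x hx y hy z hz
    | zero => simp
    | add u v _ _ hu hv => rw [mul_add, map_add, hu, hv, add_zero]
    | smul c u _ hu => rw [mul_smul_comm, map_smul, hu, smul_zero]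
  -- second variable
  have h2 : ∀ x ∈ I₁, ∀ v w : A, f (x * v * w) = 0 := by
    intro x hx v w
    have hv : v ∈ Submodule.span K (I₂ : Set A) := by
      rw [hspan.2.1]; exact Submodule.mem_top
    induction hv using Submodule.span_induction with
    | mem y hy => exact h3 x hx y hy w
    | zero => simp
    | add u v _ _ hu hv =>
        have : x * (u + v) * w = x * u * w + x * v * w := by ring
        rw [this, map_add, hu, hv, add_zero]
    | smul c u _ hu =>
        have : x * (c • u) * w = c • (x * u * w) := by
          rw [mul_smul_comm, smul_mul_assoc]
        rw [this, map_smul, hu, smul_zero]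
  -- first variable
  have h1 : ∀ u v w : A, f (u * v * w) = 0 := by
    intro u v w
    have hu : u ∈ Submodule.span K (I₁ : Set A) := by
      rw [hspan.1]; exact Submodule.mem_top
    induction hu using Submodule.span_induction with
    | mem x hx => exact h2 x hx v w
    | zero => simp
    | add s t _ _ hs ht =>
        have : (s + t) * v * w = s * v * w + t * v * w := by ring
        rw [this, map_add, hs, ht, add_zero]
    | smul c s _ hs =>
        have : (c • s) * v * w = c • (s * v * w) := by
          rw [smul_mul_assoc, smul_mul_assoc]
        rw [this, map_smul, hs, smul_zero]
  have key : ∀ w : A, b.repr ((γ - 1) * w) 1 = 0 := by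
    intro w
    have := h1 1 1 w
    simpa [f] using this
  -- `γ - 1 = c • 1`
  have e1 : b.repr (γ - 1) 1 = 0 := by
    have := key 1
    rwa [mul_one] at this
  set c := b.repr (γ - 1) 0 with hc
  have hdecomp : γ - 1 = c • (1 : A) := by
    have hs := b.sum_repr (γ - 1)
    rw [Fin.sum_univ_two] at hs
    rw [← hs, e1, hb0, zero_smul, add_zero]
  have e2 : c = 0 := by
    have := key (b 1)
    rw [hdecomp, smul_mul_assoc, one_mul, map_smul, Finsupp.smul_apply,
      b.repr_self] at this
    simpa using this
  have : γ - 1 = 0 := by rw [hdecomp, e2, zero_smul]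
  linear_combination (norm := ring_nf) this
end

section
/- Let p ≥ 3 be prime, u ∈ Z_p^× a non-square mod p, Sₙ = Z_p[pⁿ√u] ⊆ Z_p[√u]. Then every fractional ideal of Sₙ is, up to scaling by an element of Q_p(√u)^×, equal to one of the subrings S₀, S₁, …, Sₙ; in particular the Picard group of Sₙ is trivial. -/
lemma aux_toZMod {p : ℕ} [Fact p.Prime] (x : ℤ_[p]) :
    PadicInt.toZMod x = 0 ↔ ¬ IsUnit x := by
  rw [show (PadicInt.toZMod x = 0) ↔ x ∈ RingHom.ker (PadicInt.toZMod (p := p)) from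
    RingHom.mem_ker.symm, PadicInt.ker_toZMod, IsLocalRing.mem_maximalIdeal]
  exact mem_nonunits_iff

lemma aux_unit {p : ℕ} [Fact p.Prime] (u : ℤ_[p]) (hu : IsUnit u)
    (hnsq : ¬ ∃ z : ZMod p, z * z = PadicInt.toZMod u)
    (a b : ℤ_[p]) (h : IsUnit a ∨ IsUnit b) :
    IsUnit (a * a - u * (b * b)) := by
  by_contra hcon
  rw [← aux_toZMod] at hcon
  simp only [map_sub, map_mul, sub_eq_zero] at hcon
  by_cases hb : PadicInt.toZMod b = 0
  · rw [hb, mul_zero, mul_zero] at hcon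
    rcases h with h | h
    · exact ((aux_toZMod a).mp (mul_self_eq_zero.mp hcon)) h
    · exact ((aux_toZMod b).mp hb) h
  · apply hnsq
    refine ⟨PadicInt.toZMod a * (PadicInt.toZMod b)⁻¹, ?_⟩
    have hb2 : (PadicInt.toZMod b)⁻¹ * PadicInt.toZMod b = 1 := inv_mul_cancel₀ hb
    calc PadicInt.toZMod a * (PadicInt.toZMod b)⁻¹ * (PadicInt.toZMod a * (PadicInt.toZMod b)⁻¹)
        = (PadicInt.toZMod a * PadicInt.toZMod a) * ((PadicInt.toZMod b)⁻¹ * (PadicInt.toZMod b)⁻¹) := by ring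
      _ = PadicInt.toZMod u * (PadicInt.toZMod b * PadicInt.toZMod b) * ((PadicInt.toZMod b)⁻¹ * (PadicInt.toZMod b)⁻¹) := by rw [← hcon]
      _ = PadicInt.toZMod u * (((PadicInt.toZMod b)⁻¹ * PadicInt.toZMod b) * ((PadicInt.toZMod b)⁻¹ * PadicInt.toZMod b)) := by ring
      _ = PadicInt.toZMod u := by rw [hb2]; ring

section
set_option linter.unusedSectionVars false
variable {p : ℕ} [Fact p.Prime] {u : ℤ_[p]}
variable {L : Type*} [CommRing L] [Algebra ℚ_[p] L] [Algebra ℤ_[p] L] [IsScalarTower ℤ_[p] ℚ_[p] L]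
variable {ρ : L} {bL : Module.Basis (Fin 2) ℚ_[p] L}

local notation "SS" i => Submodule.span ℤ_[p] ({1, (p : L) ^ i * ρ} : Set L)

lemma zsmul_eq (a : ℤ_[p]) (x : L) : a • x = ((a:ℚ_[p])) • x := by
  rw [← PadicInt.algebraMap_apply, algebraMap_smul]

lemma repr_eq (hb0 : bL 0 = 1) (hb1 : bL 1 = ρ) (x : L) :
    x = bL.repr x 0 • (1:L) + bL.repr x 1 • ρ := by
  conv_lhs => rw [← Module.Basis.sum_repr bL x]
  rw [Fin.sum_univ_two, hb0, hb1]

lemma repr_coord (hb0 : bL 0 = 1) (hb1 : bL 1 = ρ) (a b : ℚ_[p]) :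
    bL.repr (a • (1:L) + b • ρ) 0 = a ∧ bL.repr (a • (1:L) + b • ρ) 1 = b := by
  rw [← hb0, ← hb1]
  simp [Module.Basis.repr_self, Finsupp.single_apply]

lemma pL_pow (i : ℕ) : ((p:L))^i * ρ = (((p:ℚ_[p])^i)) • ρ := by
  have : ((p:L))^i = algebraMap ℚ_[p] L ((p:ℚ_[p])^i) := by
    rw [map_pow, map_natCast]
  rw [this, Algebra.smul_def]

lemma prod_formula (hρ : ρ * ρ = algebraMap ℚ_[p] L (u : ℚ_[p])) (a b c d : ℚ_[p]) :
    (a • (1:L) + b • ρ) * (c • (1:L) + d • ρ)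
      = (a*c + (u:ℚ_[p])*(b*d)) • (1:L) + (a*d + b*c) • ρ := by
  have h2 : ρ * ρ = ((u:ℚ_[p])) • (1:L) := by rw [hρ, Algebra.algebraMap_eq_smul_one]
  simp only [add_mul, mul_add, smul_mul_smul_comm, h2, smul_smul, one_mul, mul_one, add_smul,
    mul_comm]
  abel

lemma scal_eq {s₁ s₂ t₁ t₂ : ℚ_[p]} (h1 : s₁ = s₂) (h2 : t₁ = t₂) :
    s₁ • (1:L) + t₁ • ρ = s₂ • (1:L) + t₂ • ρ := by rw [h1, h2]

lemma mem_SS {i : ℕ} {x : L} :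
    x ∈ (SS i) ↔ ∃ a b : ℤ_[p], x = a • (1:L) + b • ((p:L)^i * ρ) := by
  rw [Submodule.mem_span_pair]
  constructor
  · rintro ⟨a, b, h⟩; exact ⟨a, b, h.symm⟩
  · rintro ⟨a, b, h⟩; exact ⟨a, b, h.symm⟩

lemma one_mem_SS {i : ℕ} : (1:L) ∈ (SS i) :=
  Submodule.subset_span (Set.mem_insert _ _)

lemma mem_S0_iff (hb0 : bL 0 = 1) (hb1 : bL 1 = ρ) (x : L) :
    x ∈ (SS 0) ↔ ‖bL.repr x 0‖ ≤ 1 ∧ ‖bL.repr x 1‖ ≤ 1 := by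
  constructor
  · intro hx
    rw [mem_SS] at hx; obtain ⟨a, b, rfl⟩ := hx
    simp only [pow_zero, one_mul, zsmul_eq]
    rw [(repr_coord hb0 hb1 _ _).1, (repr_coord hb0 hb1 _ _).2]
    rw [← PadicInt.norm_def, ← PadicInt.norm_def]
    exact ⟨a.norm_le_one, b.norm_le_one⟩
  · rintro ⟨h1, h2⟩
    rw [mem_SS]
    obtain ⟨a, ha⟩ : ∃ a : ℤ_[p], (a : ℚ_[p]) = bL.repr x 0 := ⟨⟨_, h1⟩, rfl⟩
    obtain ⟨b, hb⟩ : ∃ b : ℤ_[p], (b : ℚ_[p]) = bL.repr x 1 := ⟨⟨_, h2⟩, rfl⟩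
    refine ⟨a, b, ?_⟩
    simp only [pow_zero, one_mul, zsmul_eq]
    rw [ha, hb]
    exact repr_eq hb0 hb1 x

lemma SS_mul (hρ : ρ * ρ = algebraMap ℚ_[p] L (u : ℚ_[p])) {i : ℕ} {x y : L}
    (hx : x ∈ (SS i)) (hy : y ∈ (SS i)) : x * y ∈ (SS i) := by
  rw [mem_SS] at hx hy ⊢
  obtain ⟨a, b, rfl⟩ := hx
  obtain ⟨c, d, rfl⟩ := hy
  refine ⟨a*c + u*(b*d)*(p:ℤ_[p])^(2*i), a*d + b*c, ?_⟩
  simp only [zsmul_eq, pL_pow, smul_smul, prod_formula hρ]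
  exact scal_eq (by push_cast; ring) (by push_cast; ring)

lemma SS_inv (hρ : ρ * ρ = algebraMap ℚ_[p] L (u : ℚ_[p]))
    (hu : IsUnit u) (hnsq : ¬ ∃ z : ZMod p, z * z = PadicInt.toZMod u)
    (a b : ℤ_[p]) (h : IsUnit a ∨ IsUnit b) :
    ∃ y ∈ (SS 0), ((a:ℚ_[p]) • (1:L) + (b:ℚ_[p]) • ρ) * y = 1 := by
  obtain ⟨d, hd⟩ := (aux_unit u hu hnsq a b h).exists_right_inv
  refine ⟨(a*d : ℤ_[p]) • (1:L) + (-(b*d) : ℤ_[p]) • ρ, ?_, ?_⟩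
  · rw [mem_SS]; exact ⟨a*d, -(b*d), by simp⟩
  · simp only [zsmul_eq]
    rw [prod_formula hρ]
    have hdq : ((a:ℚ_[p])*(a:ℚ_[p]) - (u:ℚ_[p])*((b:ℚ_[p])*(b:ℚ_[p]))) * (d:ℚ_[p]) = 1 := by
      exact_mod_cast congrArg (fun z : ℤ_[p] => (z : ℚ_[p])) hd
    have h1 : (a:ℚ_[p]) * ((a*d : ℤ_[p]):ℚ_[p]) + (u:ℚ_[p]) * ((b:ℚ_[p]) * ((-(b*d) : ℤ_[p]):ℚ_[p])) = 1 := by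
      push_cast
      rw [← hdq]; ring
    have h2 : (a:ℚ_[p]) * ((-(b*d) : ℤ_[p]):ℚ_[p]) + (b:ℚ_[p]) * ((a*d : ℤ_[p]):ℚ_[p]) = 0 := by
      push_cast; ring
    rw [h1, h2, one_smul, zero_smul, add_zero]

end

section
set_option linter.unusedSectionVars false
variable {p : ℕ} [Fact p.Prime] {u : ℤ_[p]}
variable {L : Type*} [CommRing L] [Algebra ℚ_[p] L] [Algebra ℤ_[p] L] [IsScalarTower ℤ_[p] ℚ_[p] L]
variable {ρ : L} {bL : Module.Basis (Fin 2) ℚ_[p] L}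

local notation "SS" i => Submodule.span ℤ_[p] ({1, (p : L) ^ i * ρ} : Set L)

lemma pn_smul_rho (i : ℕ) : ((p:ℤ_[p])^i) • ρ = (p:L)^i * ρ := by
  rw [zsmul_eq, pL_pow]
  push_cast
  rfl

lemma classify (hb0 : bL 0 = 1) (hb1 : bL 1 = ρ) (n : ℕ) (J : Submodule ℤ_[p] L)
    (h1 : (SS n) ≤ J) (h2 : J ≤ (SS 0)) : ∃ i ≤ n, J = (SS i) := by
  have hp0 : (p:ℤ_[p]) ≠ 0 := by
    exact_mod_cast (Nat.cast_ne_zero (R := ℤ_[p])).mpr (Fact.out : p.Prime).ne_zero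
  set T : Ideal ℤ_[p] := Submodule.comap (LinearMap.toSpanSingleton ℤ_[p] L ρ) J with hT
  have hone : (1:L) ∈ J := h1 one_mem_SS
  have hpn : (p:ℤ_[p])^n ∈ T := by
    show ((p:ℤ_[p])^n) • ρ ∈ J
    rw [pn_smul_rho]
    exact h1 (Submodule.subset_span (Set.mem_insert_of_mem _ rfl))
  have hTne : T ≠ ⊥ := by
    intro h
    rw [h, Submodule.mem_bot] at hpn
    exact pow_ne_zero n hp0 hpn
  obtain ⟨i, hi⟩ := PadicInt.ideal_eq_span_pow_p hTne
  have hilen : i ≤ n := by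
    rw [hi, Ideal.mem_span_singleton] at hpn
    exact (pow_dvd_pow_iff hp0 (PadicInt.prime_p.not_unit)).mp hpn
  refine ⟨i, hilen, le_antisymm ?_ ?_⟩
  · intro x hx
    have hx0 := h2 hx
    rw [mem_SS] at hx0
    obtain ⟨a, b, hab⟩ := hx0
    rw [pow_zero, one_mul] at hab
    have hbJ : b • ρ ∈ J := by
      have : b • ρ = x - a • (1:L) := by rw [hab]; abel
      rw [this]
      exact Submodule.sub_mem J hx (Submodule.smul_mem J a hone)
    have hbT : b ∈ T := hbJ
    rw [hi, Ideal.mem_span_singleton] at hbT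
    obtain ⟨c, hc⟩ := hbT
    rw [mem_SS]
    refine ⟨a, c, ?_⟩
    rw [hab, hc]
    congr 1
    rw [show ((p:L)^i * ρ) = ((p:ℤ_[p])^i) • ρ from (pn_smul_rho i).symm]
    rw [mul_comm, mul_smul]
  · rw [Submodule.span_le]
    rintro x (rfl | rfl)
    · exact hone
    · rw [← pn_smul_rho]
      have : (p:ℤ_[p])^i ∈ T := by rw [hi]; exact Ideal.subset_span rfl
      exact this

end

/-- Let `p ≥ 3` be prime, `u ∈ ℤ_p^×` a non-square mod `p`, and
`Sₙ = ℤ_p[pⁿ√u] ⊆ ℤ_p[√u]` inside `L = ℚ_p(√u)` (presented as the `ℚ_p`-algebra with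
basis `{1, √u}` and `(√u)² = u`).  Then every fractional ideal of `Sₙ` is, up to scaling
by an element of `L^×`, one of the subrings `S₀, S₁, …, Sₙ`; in particular every
invertible fractional ideal is a scaling of `Sₙ`, so `Pic Sₙ` is trivial. -/
theorem stmt14 (p : ℕ) [Fact p.Prime] (hp : 3 ≤ p)
    (u : ℤ_[p]) (hu : IsUnit u)
    (hnsq : ¬ ∃ z : ZMod p, z * z = PadicInt.toZMod u)
    (L : Type*) [CommRing L] [Algebra ℚ_[p] L] [Algebra ℤ_[p] L]
    [IsScalarTower ℤ_[p] ℚ_[p] L]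
    (ρ : L) (bL : Module.Basis (Fin 2) ℚ_[p] L) (hb0 : bL 0 = 1) (hb1 : bL 1 = ρ)
    (hρ : ρ * ρ = algebraMap ℚ_[p] L (u : ℚ_[p]))
    (n : ℕ)
    (Sm : ℕ → Submodule ℤ_[p] L)
    (hSm : ∀ i, Sm i = Submodule.span ℤ_[p] ({1, (p : L) ^ i * ρ} : Set L)) :
    ∀ I : Submodule ℤ_[p] L, I.FG → (∀ s ∈ Sm n, ∀ x ∈ I, s * x ∈ I) →
      Submodule.span ℚ_[p] (I : Set L) = ⊤ →
      ((∃ γ : L, IsUnit γ ∧ ∃ i ≤ n,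
          I = Submodule.map (LinearMap.mulLeft ℤ_[p] γ) (Sm i)) ∧
       ((∃ J : Submodule ℤ_[p] L, (∀ s ∈ Sm n, ∀ x ∈ J, s * x ∈ J) ∧ I * J = Sm n) →
          ∃ γ : L, IsUnit γ ∧ I = Submodule.map (LinearMap.mulLeft ℤ_[p] γ) (Sm n))) := by
  intro I hFG hstab hspan
  rw [hSm] at hstab
  have hLnt : Nontrivial L := nontrivial_of_ne (bL 0) 0 (bL.ne_zero 0)
  obtain ⟨s, hsspan⟩ := hFG
  -- a nonzero generator exists
  have hex : ∃ x0 ∈ s, x0 ≠ (0:L) := by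
    by_contra h
    push_neg at h
    have hIbot : I = ⊥ := by
      rw [← hsspan, Submodule.span_eq_bot]; exact h
    rw [hIbot] at hspan
    rw [show ((⊥ : Submodule ℤ_[p] L) : Set L) = {(0:L)} from Submodule.bot_coe,
      Submodule.span_zero_singleton] at hspan
    exact absurd hspan bot_ne_top
  obtain ⟨x0, hx0s, hx0⟩ := hex
  set f : L → ℝ := fun x => max ‖bL.repr x 0‖ ‖bL.repr x 1‖ with hf
  obtain ⟨xm, hxms, hmax⟩ := s.exists_max_image f ⟨x0, hx0s⟩
  have hfx0 : 0 < f x0 := by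
    rcases (lt_or_ge 0 (f x0)) with h | h
    · exact h
    · exfalso
      have h0 : ‖bL.repr x0 0‖ = 0 ∧ ‖bL.repr x0 1‖ = 0 := by
        constructor <;> [have := le_trans (le_max_left ‖bL.repr x0 0‖ ‖bL.repr x0 1‖) h;
                         have := le_trans (le_max_right ‖bL.repr x0 0‖ ‖bL.repr x0 1‖) h] <;>
          exact le_antisymm this (norm_nonneg _)
      apply hx0
      rw [repr_eq hb0 hb1 x0, norm_eq_zero.mp h0.1, norm_eq_zero.mp h0.2, zero_smul, zero_smul,
        add_zero]
  have hm : 0 < f xm := lt_of_lt_of_le hfx0 (hmax x0 hx0s)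
  obtain ⟨z, hz, hzcase⟩ : ∃ z : ℚ_[p], ‖z‖ = f xm ∧
      (z = bL.repr xm 0 ∨ z = bL.repr xm 1) := by
    rcases max_choice ‖bL.repr xm 0‖ ‖bL.repr xm 1‖ with hch | hch
    · exact ⟨bL.repr xm 0, hch.symm ▸ rfl, Or.inl rfl⟩
    · exact ⟨bL.repr xm 1, hch.symm ▸ rfl, Or.inr rfl⟩
  have hz0 : z ≠ 0 := by
    intro h; rw [h, norm_zero] at hz; exact absurd hz.symm (ne_of_gt hm)
  have hrep : ∀ (x : L) (j : Fin 2), bL.repr (z⁻¹ • x) j = z⁻¹ * bL.repr x j := by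
    intro x j; rw [map_smul, Finsupp.smul_apply, smul_eq_mul]
  have hbound : ∀ x ∈ s, ∀ j : Fin 2, ‖z⁻¹ * bL.repr x j‖ ≤ 1 := by
    intro x hx j
    have hle : ‖bL.repr x j‖ ≤ f xm := by
      refine le_trans ?_ (hmax x hx)
      fin_cases j
      · exact le_max_left _ _
      · exact le_max_right _ _
    rw [norm_mul, norm_inv]
    calc ‖z‖⁻¹ * ‖bL.repr x j‖ ≤ ‖z‖⁻¹ * ‖z‖ := by
          apply mul_le_mul_of_nonneg_left _ (inv_nonneg.mpr (norm_nonneg _))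
          rw [hz]; exact hle
      _ = 1 := inv_mul_cancel₀ (norm_ne_zero_iff.mpr hz0)
  have hsmem : ∀ x ∈ s, z⁻¹ • x ∈ Submodule.span ℤ_[p] ({1, (p : L) ^ 0 * ρ} : Set L) := by
    intro x hx
    rw [mem_S0_iff hb0 hb1]
    exact ⟨by rw [hrep]; exact hbound x hx 0, by rw [hrep]; exact hbound x hx 1⟩
  set a : ℤ_[p] := ⟨z⁻¹ * bL.repr xm 0, hbound xm hxms 0⟩ with ha
  set b : ℤ_[p] := ⟨z⁻¹ * bL.repr xm 1, hbound xm hxms 1⟩ with hb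
  have hxm' : z⁻¹ • xm = (a:ℚ_[p]) • (1:L) + (b:ℚ_[p]) • ρ := by
    have h' := repr_eq hb0 hb1 (z⁻¹ • xm)
    rw [hrep, hrep] at h'
    exact h'
  have hab : IsUnit a ∨ IsUnit b := by
    rcases hzcase with hch | hch
    · left
      rw [PadicInt.isUnit_iff, PadicInt.norm_def]
      show ‖z⁻¹ * bL.repr xm 0‖ = 1
      rw [← hch, inv_mul_cancel₀ hz0, norm_one]
    · right
      rw [PadicInt.isUnit_iff, PadicInt.norm_def]
      show ‖z⁻¹ * bL.repr xm 1‖ = 1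
      rw [← hch, inv_mul_cancel₀ hz0, norm_one]
  obtain ⟨y, hySS, hxy⟩ := SS_inv hρ hu hnsq a b hab
  rw [← hxm'] at hxy
  set δ : L := z⁻¹ • y with hδ
  have hγδ : xm * δ = 1 := by
    show xm * (z⁻¹ • y) = 1
    rw [mul_smul_comm]
    rw [smul_mul_assoc] at hxy
    exact hxy
  have hunit : IsUnit xm := IsUnit.of_mul_eq_one _ hγδ
  have hxmI : xm ∈ I := by rw [← hsspan]; exact Submodule.subset_span hxms
  set J : Submodule ℤ_[p] L := Submodule.map (LinearMap.mulLeft ℤ_[p] δ) I with hJ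
  have honeJ : (1:L) ∈ J := by
    refine ⟨xm, hxmI, ?_⟩
    rw [LinearMap.mulLeft_apply, mul_comm]; exact hγδ
  have hJstab : ∀ w ∈ Submodule.span ℤ_[p] ({1, (p : L) ^ n * ρ} : Set L),
      ∀ x ∈ J, w * x ∈ J := by
    rintro w hw x ⟨t, ht, rfl⟩
    refine ⟨w * t, hstab w hw t ht, ?_⟩
    rw [LinearMap.mulLeft_apply, LinearMap.mulLeft_apply]; ring
  have hSnJ : Submodule.span ℤ_[p] ({1, (p : L) ^ n * ρ} : Set L) ≤ J := by
    intro w hw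
    have := hJstab w hw 1 honeJ
    rwa [mul_one] at this
  have hJS0 : J ≤ Submodule.span ℤ_[p] ({1, (p : L) ^ 0 * ρ} : Set L) := by
    rw [hJ, Submodule.map_le_iff_le_comap, ← hsspan, Submodule.span_le]
    intro x hx
    simp only [SetLike.mem_coe, Submodule.mem_comap, LinearMap.mulLeft_apply]
    show (z⁻¹ • y) * x ∈ _
    rw [smul_mul_assoc, ← mul_smul_comm]
    exact SS_mul hρ hySS (hsmem x hx)
  obtain ⟨i, hin, hJeq⟩ := classify hb0 hb1 n J hSnJ hJS0
  have hIJ : Submodule.map (LinearMap.mulLeft ℤ_[p] xm) J = I := by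
    rw [hJ, ← Submodule.map_comp, ← LinearMap.mulLeft_mul, hγδ, LinearMap.mulLeft_one,
      Submodule.map_id]
  have hImap : I = Submodule.map (LinearMap.mulLeft ℤ_[p] xm)
      (Submodule.span ℤ_[p] ({1, (p : L) ^ i * ρ} : Set L)) := by
    rw [← hJeq, hIJ]
  constructor
  · exact ⟨xm, hunit, i, hin, by rw [hSm i]; exact hImap⟩
  · rintro ⟨K, hKstab, hIK⟩
    refine ⟨xm, hunit, ?_⟩
    have hstabI : ∀ w ∈ Submodule.span ℤ_[p] ({1, (p : L) ^ i * ρ} : Set L),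
        ∀ x ∈ I, w * x ∈ I := by
      intro w hw x hx
      rw [hImap] at hx ⊢
      obtain ⟨t, ht, rfl⟩ := hx
      refine ⟨w * t, SS_mul hρ hw ht, ?_⟩
      rw [LinearMap.mulLeft_apply, LinearMap.mulLeft_apply]; ring
    have hSSle : Submodule.span ℤ_[p] ({1, (p : L) ^ i * ρ} : Set L) ≤
        Submodule.span ℤ_[p] ({1, (p : L) ^ n * ρ} : Set L) := by
      intro w hw
      have h1K : (1:L) ∈ I * K := by rw [hIK, hSm n]; exact one_mem_SS
      have hIK' : ∀ v ∈ I * K, w * v ∈ I * K := by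
        intro v hv
        refine Submodule.mul_induction_on hv (fun x hx y hy => ?_) (fun x y hx hy => ?_)
        · rw [← mul_assoc]; exact Submodule.mul_mem_mul (hstabI w hw x hx) hy
        · rw [mul_add]; exact add_mem hx hy
      have hw1 := hIK' 1 h1K
      rw [mul_one, hIK, hSm n] at hw1
      exact hw1
    have hSSge : Submodule.span ℤ_[p] ({1, (p : L) ^ n * ρ} : Set L) ≤
        Submodule.span ℤ_[p] ({1, (p : L) ^ i * ρ} : Set L) := by
      rw [Submodule.span_le]
      rintro x (rfl | rfl)
      · exact one_mem_SS
      · rw [SetLike.mem_coe, mem_SS]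
        refine ⟨0, (p:ℤ_[p])^(n-i), ?_⟩
        have hpow : (p:ℤ_[p])^(n-i) * (p:ℤ_[p])^i = (p:ℤ_[p])^n := by
          rw [← pow_add, Nat.sub_add_cancel hin]
        rw [zero_smul, zero_add,
          show ((p:L)^i * ρ) = ((p:ℤ_[p])^i) • ρ from (pn_smul_rho i).symm,
          smul_smul, hpow, pn_smul_rho]
    have heq : Submodule.span ℤ_[p] ({1, (p : L) ^ i * ρ} : Set L) =
        Submodule.span ℤ_[p] ({1, (p : L) ^ n * ρ} : Set L) := le_antisymm hSSle hSSge
    rw [hSm n, ← heq]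
    exact hImap
end

section
/- With Sᵢ = Z_p + pⁱ√u·Z_p ideals of Sₙ (0 ≤ i ≤ j ≤ k ≤ n, p odd, u a non-square unit), there exists γ ∈ Q_p(√u)^× with γ·SᵢSⱼSₖ ⊆ Sₙ and v_p(N(γ)) = 3n − i − j − k if and only if i + j + k ≡ n (mod 2) and (n−j) + (n−k) ≥ n − i. -/
set_option linter.unusedSectionVars false
set_option maxHeartbeats 1000000

section aux
variable {p : ℕ} [Fact p.Prime] {u : ℤ_[p]}
variable {L : Type*} [CommRing L] [Algebra ℚ_[p] L] [Algebra ℤ_[p] L]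
  [IsScalarTower ℤ_[p] ℚ_[p] L]
variable {ρ : L} {bL : Module.Basis (Fin 2) ℚ_[p] L}

lemma repr_combo0_s15 (hb0 : bL 0 = 1) (hb1 : bL 1 = ρ) (a b : ℚ_[p]) :
    bL.repr (a • (1:L) + b • ρ) 0 = a := by
  rw [← hb0, ← hb1]; simp [Finsupp.single_apply]

lemma repr_combo1_s15 (hb0 : bL 0 = 1) (hb1 : bL 1 = ρ) (a b : ℚ_[p]) :
    bL.repr (a • (1:L) + b • ρ) 1 = b := by
  rw [← hb0, ← hb1]; simp [Finsupp.single_apply]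

lemma decompL (hb0 : bL 0 = 1) (hb1 : bL 1 = ρ) (x : L) :
    x = (bL.repr x 0) • (1:L) + (bL.repr x 1) • ρ := by
  conv_lhs => rw [← bL.sum_repr x]
  rw [Fin.sum_univ_two, hb0, hb1]

lemma pPowMul (m : ℕ) : (p : L) ^ m * ρ = ((p : ℚ_[p]) ^ m) • ρ := by
  rw [Algebra.smul_def, map_pow, map_natCast]

lemma mem_span_iff (hb0 : bL 0 = 1) (hb1 : bL 1 = ρ) (m : ℕ) (x : L) :
    x ∈ Submodule.span ℤ_[p] ({1, (p : L) ^ m * ρ} : Set L) ↔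
      ∃ s t : ℤ_[p], bL.repr x 0 = (s : ℚ_[p]) ∧ bL.repr x 1 = (p : ℚ_[p]) ^ m * t := by
  have combo : ∀ s t : ℤ_[p],
      s • (1:L) + t • ((p : L) ^ m * ρ)
        = ((s : ℚ_[p])) • (1:L) + ((p : ℚ_[p]) ^ m * (t : ℚ_[p])) • ρ := by
    intro s t
    rw [pPowMul, algebra_compatible_smul ℚ_[p] s (1:L), algebra_compatible_smul ℚ_[p] t,
      PadicInt.algebraMap_apply, PadicInt.algebraMap_apply, smul_smul, mul_comm (t : ℚ_[p])]
  rw [Submodule.mem_span_pair]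
  constructor
  · rintro ⟨s, t, rfl⟩
    exact ⟨s, t, by rw [combo, repr_combo0_s15 hb0 hb1], by rw [combo, repr_combo1_s15 hb0 hb1]⟩
  · rintro ⟨s, t, h0, h1⟩
    exact ⟨s, t, by rw [combo, ← h0, ← h1, ← decompL hb0 hb1]⟩

lemma mul_combo (hρ : ρ * ρ = algebraMap ℚ_[p] L (u : ℚ_[p])) (a b c d : ℚ_[p]) :
    (a • (1:L) + b • ρ) * (c • (1:L) + d • ρ)
      = (a * c + u * (b * d)) • (1:L) + (a * d + b * c) • ρ := by
  simp only [Algebra.smul_def, map_mul, map_add, mul_one]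
  ring_nf
  have : ρ ^ 2 = algebraMap ℚ_[p] L (u : ℚ_[p]) := by rw [sq]; exact hρ
  rw [this]
  ring

lemma mul_rho_combo (hρ : ρ * ρ = algebraMap ℚ_[p] L (u : ℚ_[p])) (a b : ℚ_[p]) (m : ℕ) :
    (a • (1:L) + b • ρ) * ((p:L)^m * ρ)
      = ((p:ℚ_[p])^m * ((u:ℚ_[p]) * b)) • (1:L) + ((p:ℚ_[p])^m * a) • ρ := by
  rw [pPowMul, mul_smul_comm,
    show (a • (1:L) + b • ρ) * ρ
        = (a • (1:L) + b • ρ) * ((0:ℚ_[p]) • (1:L) + (1:ℚ_[p]) • ρ) by simp,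
    mul_combo hρ]
  simp [smul_add, smul_smul, mul_comm, mul_assoc, mul_left_comm]

lemma norm_formula (hb0 : bL 0 = 1) (hb1 : bL 1 = ρ)
    (hρ : ρ * ρ = algebraMap ℚ_[p] L (u : ℚ_[p])) (γ : L) :
    Algebra.norm ℚ_[p] γ = (bL.repr γ 0)^2 - (u : ℚ_[p]) * (bL.repr γ 1)^2 := by
  set a := bL.repr γ 0 with ha
  set b := bL.repr γ 1 with hbb
  have hγ : γ = a • (1:L) + b • ρ := decompL hb0 hb1 γ
  have h0 : γ * bL 0 = a • (1:L) + b • ρ := by rw [hb0, mul_one, hγ]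
  have h1 : γ * bL 1 = ((u:ℚ_[p]) * b) • (1:L) + a • ρ := by
    rw [hb1, hγ]
    have := mul_combo hρ a b 0 1
    simpa using this
  rw [Algebra.norm_eq_matrix_det bL, Matrix.det_fin_two]
  simp only [Algebra.leftMulMatrix_eq_repr_mul, h0, h1,
    repr_combo0_s15 hb0 hb1, repr_combo1_s15 hb0 hb1]
  ring

lemma max_sq (x y : ℝ) (hx : 0 ≤ x) (hy : 0 ≤ y) :
    (max x y)^2 = max (x^2) (y^2) := by
  rcases le_total x y with h | h
  · rw [max_eq_right h, max_eq_right (by nlinarith)]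
  · rw [max_eq_left h, max_eq_left (by nlinarith)]

lemma unit_norm_one (hu : IsUnit u) : ‖(u : ℚ_[p])‖ = 1 := by
  rw [PadicInt.padic_norm_e_of_padicInt]
  exact PadicInt.isUnit_iff.mp hu

lemma norm_one_of_toZMod_ne (x : ℤ_[p]) (hx : PadicInt.toZMod x ≠ 0) : ‖x‖ = 1 := by
  rcases lt_or_eq_of_le (PadicInt.norm_le_one x) with h | h
  · exfalso
    apply hx
    rw [← RingHom.mem_ker, PadicInt.ker_toZMod, IsLocalRing.mem_maximalIdeal,
      PadicInt.mem_nonunits]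
    exact h
  · exact h

lemma key_norm (hu : IsUnit u)
    (hnsq : ¬ ∃ z : ZMod p, z * z = PadicInt.toZMod u)
    (a b : ℚ_[p]) (h : ¬ (a = 0 ∧ b = 0)) :
    a^2 - (u : ℚ_[p]) * b^2 ≠ 0 ∧
      ‖a^2 - (u : ℚ_[p]) * b^2‖ = (max ‖a‖ ‖b‖)^2 := by
  have hun : ‖(u : ℚ_[p])‖ = 1 := unit_norm_one hu
  have hu0 : (u : ℚ_[p]) ≠ 0 := by
    intro h0; rw [h0] at hun; simp at hun
  by_cases hab : ‖a‖ = ‖b‖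
  · have hb : b ≠ 0 := by
      intro h0
      rcases (not_and_or.mp h) with ha | hb'
      · exact ha (norm_eq_zero.mp (by rw [hab, h0, norm_zero]))
      · exact hb' h0
    have ha : a ≠ 0 := by
      intro h0
      apply hb
      rw [← norm_eq_zero, ← hab, h0, norm_zero]
    have hcn : ‖a / b‖ = 1 := by
      rw [norm_div, hab, div_self (by simpa using hb)]
    set C : ℤ_[p] := ⟨a / b, le_of_eq hcn⟩ with hC
    have hCc : (C : ℚ_[p]) = a / b := rfl
    have hCu : ‖C * C - u‖ = 1 := by
      apply norm_one_of_toZMod_ne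
      rw [map_sub, map_mul, sub_ne_zero]
      intro heq
      exact hnsq ⟨PadicInt.toZMod C, heq⟩
    have hexp : a^2 - (u : ℚ_[p]) * b^2 = b^2 * ((C * C - u : ℤ_[p]) : ℚ_[p]) := by
      push_cast [hCc]
      field_simp
    rw [hexp]
    constructor
    · apply mul_ne_zero (pow_ne_zero _ hb)
      rw [PadicInt.coe_ne_zero]
      intro h0; rw [h0] at hCu; simp at hCu
    · rw [norm_mul, PadicInt.padic_norm_e_of_padicInt, hCu, mul_one, hab, max_self,
        norm_pow]
  · have hne : ‖a^2‖ ≠ ‖-((u : ℚ_[p]) * b^2)‖ := by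
      rw [norm_neg, norm_mul, hun, one_mul, norm_pow, norm_pow]
      intro heq
      exact hab (by nlinarith [norm_nonneg a, norm_nonneg b])
    have hmax : ‖a^2 - (u : ℚ_[p]) * b^2‖ = max (‖a‖^2) (‖b‖^2) := by
      rw [sub_eq_add_neg, Padic.add_eq_max_of_ne hne, norm_neg, norm_mul, hun,
        one_mul, norm_pow, norm_pow]
    constructor
    · intro h0
      rw [h0, norm_zero] at hmax
      have : a = 0 ∧ b = 0 := by
        constructor <;>
          · rw [← norm_eq_zero]
            nlinarith [norm_nonneg a, norm_nonneg b, le_max_left (‖a‖^2) (‖b‖^2),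
              le_max_right (‖a‖^2) (‖b‖^2)]
      exact h this
    · rw [hmax, max_sq _ _ (norm_nonneg a) (norm_nonneg b)]

lemma one_lt_p : (1 : ℝ) < p := by exact_mod_cast (Fact.out : p.Prime).one_lt

lemma val_eq_of_norm {x : ℚ_[p]} {m : ℤ} (hx : x ≠ 0) (h : ‖x‖ = (p:ℝ)^(-m)) :
    x.valuation = m := by
  rw [Padic.norm_eq_zpow_neg_valuation hx] at h
  have := (zpow_right_inj₀ (a := (p:ℝ))
    (by exact_mod_cast (Fact.out : p.Prime).pos) (ne_of_gt one_lt_p)).mp h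
  omega

lemma val_ge_of_norm_le {x : ℚ_[p]} {e : ℤ} (hx : x ≠ 0) (h : ‖x‖ ≤ (p:ℝ)^(-e)) :
    e ≤ x.valuation := by
  rw [Padic.norm_eq_zpow_neg_valuation hx] at h
  have := (zpow_le_zpow_iff_right₀ (one_lt_p (p := p))).mp h
  omega

lemma norm_p_pow' (m : ℕ) : ‖((p:ℚ_[p]))^m‖ = (p:ℝ)^(-(m:ℤ)) := by
  simpa using Padic.norm_p_pow (p := p) m

lemma span_mul_le (hρ : ρ * ρ = algebraMap ℚ_[p] L (u : ℚ_[p])) {a b : ℕ} (hab : a ≤ b) :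
    Submodule.span ℤ_[p] ({1, (p : L) ^ a * ρ} : Set L) *
      Submodule.span ℤ_[p] ({1, (p : L) ^ b * ρ} : Set L) ≤
    Submodule.span ℤ_[p] ({1, (p : L) ^ a * ρ} : Set L) := by
  have hρ' : ρ * ρ = algebraMap ℤ_[p] L u := by
    rw [hρ, IsScalarTower.algebraMap_apply ℤ_[p] ℚ_[p] L, PadicInt.algebraMap_apply]
  rw [Submodule.span_mul_span]
  apply Submodule.span_le.mpr
  rintro x ⟨e, he, f, hf, rfl⟩
  have h1 : (1 : L) ∈ Submodule.span ℤ_[p] ({1, (p : L) ^ a * ρ} : Set L) :=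
    Submodule.subset_span (Set.mem_insert _ _)
  have hgen : (p : L) ^ a * ρ ∈ Submodule.span ℤ_[p] ({1, (p : L) ^ a * ρ} : Set L) :=
    Submodule.subset_span (Set.mem_insert_of_mem _ rfl)
  dsimp only
  rcases he with rfl | he <;> rcases hf with rfl | hf
  · simpa using h1
  · rw [Set.mem_singleton_iff] at hf; subst hf
    rw [one_mul]
    have : (p : L) ^ b * ρ = ((p:ℤ_[p])^(b-a)) • ((p : L) ^ a * ρ) := by
      rw [Algebra.smul_def, map_pow, map_natCast, ← mul_assoc, ← pow_add,
        Nat.sub_add_cancel hab]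
    rw [this]
    exact Submodule.smul_mem _ _ hgen
  · rw [Set.mem_singleton_iff] at he; subst he
    rw [mul_one]
    exact hgen
  · rw [Set.mem_singleton_iff] at he hf; subst he; subst hf
    have : ((p : L) ^ a * ρ) * ((p : L) ^ b * ρ) = ((p:ℤ_[p])^(a+b) * u) • (1:L) := by
      rw [Algebra.smul_def, map_mul, map_pow, map_natCast, mul_one, pow_add]
      rw [show (p : L) ^ a * ρ * ((p : L) ^ b * ρ) = (p:L)^a * (p:L)^b * (ρ * ρ) by ring,
        hρ']
    rw [this]
    exact Submodule.smul_mem _ _ h1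

end aux

/-- With `Sᵢ = ℤ_p + pⁱ√u·ℤ_p` ideals of `Sₙ` (`0 ≤ i ≤ j ≤ k ≤ n`,
`p` odd, `u` a non-square unit), there exists `γ ∈ ℚ_p(√u)^×` with `γ·SᵢSⱼSₖ ⊆ Sₙ` and
`v_p(N(γ)) = 3n − i − j − k` if and only if `i + j + k ≡ n (mod 2)` and
`(n−j) + (n−k) ≥ n − i`. -/
theorem stmt15 (p : ℕ) [Fact p.Prime] (hp : 3 ≤ p)
    (u : ℤ_[p]) (hu : IsUnit u)
    (hnsq : ¬ ∃ z : ZMod p, z * z = PadicInt.toZMod u)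
    (L : Type*) [CommRing L] [Algebra ℚ_[p] L] [Algebra ℤ_[p] L]
    [IsScalarTower ℤ_[p] ℚ_[p] L]
    (ρ : L) (bL : Module.Basis (Fin 2) ℚ_[p] L) (hb0 : bL 0 = 1) (hb1 : bL 1 = ρ)
    (hρ : ρ * ρ = algebraMap ℚ_[p] L (u : ℚ_[p]))
    (Sm : ℕ → Submodule ℤ_[p] L)
    (hSm : ∀ i, Sm i = Submodule.span ℤ_[p] ({1, (p : L) ^ i * ρ} : Set L))
    (i j k n : ℕ) (hij : i ≤ j) (hjk : j ≤ k) (hkn : k ≤ n) :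
    (∃ γ : L, γ ≠ 0 ∧ (∀ x ∈ Sm i * Sm j * Sm k, γ * x ∈ Sm n) ∧
        (Algebra.norm ℚ_[p] γ).valuation = 3 * (n : ℤ) - i - j - k)
      ↔ ((i + j + k) % 2 = n % 2 ∧
          ((n : ℤ) - j) + ((n : ℤ) - k) ≥ (n : ℤ) - i) := by
  have ppos : (0:ℝ) < p := by exact_mod_cast (Fact.out : p.Prime).pos
  have hp1 : (1:ℝ) < p := one_lt_p
  have hone : ∀ m, (1:L) ∈ Sm m := fun m => by
    rw [hSm]; exact Submodule.subset_span (Set.mem_insert _ _)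
  constructor
  · rintro ⟨γ, hγ0, hmem, hval⟩
    set a := bL.repr γ 0 with ha
    set b := bL.repr γ 1 with hb
    -- γ = γ * 1 ∈ Sm n
    have h1mem : (1:L) ∈ Sm i * Sm j * Sm k := by
      have := Submodule.mul_mem_mul (Submodule.mul_mem_mul (hone i) (hone j)) (hone k)
      simpa using this
    have hρmem : (p:L)^i * ρ ∈ Sm i * Sm j * Sm k := by
      have g : (p:L)^i * ρ ∈ Sm i := by
        rw [hSm]; exact Submodule.subset_span (Set.mem_insert_of_mem _ rfl)
      have := Submodule.mul_mem_mul (Submodule.mul_mem_mul g (hone j)) (hone k)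
      simpa using this
    have m1 := hmem 1 h1mem
    rw [mul_one, hSm, mem_span_iff hb0 hb1] at m1
    obtain ⟨s, t, hs, ht⟩ := m1
    have m2 := hmem _ hρmem
    rw [hSm, mem_span_iff hb0 hb1] at m2
    obtain ⟨s', t', hs', ht'⟩ := m2
    have hmul : γ * ((p:L)^i * ρ)
        = ((p:ℚ_[p])^i * ((u:ℚ_[p]) * b)) • (1:L) + ((p:ℚ_[p])^i * a) • ρ := by
      conv_lhs => rw [decompL hb0 hb1 γ, ← ha, ← hb]
      exact mul_rho_combo hρ a b i
    rw [hmul, repr_combo1_s15 hb0 hb1] at ht'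
    -- norm bounds
    have htn : ∀ c : ℤ_[p], ‖(c : ℚ_[p])‖ ≤ 1 := fun c => by
      rw [PadicInt.padic_norm_e_of_padicInt]; exact PadicInt.norm_le_one c
    have hnb : ‖b‖ ≤ (p:ℝ)^(-(n:ℤ)) := by
      rw [hb, ht, norm_mul, norm_p_pow']
      calc (p:ℝ)^(-(n:ℤ)) * ‖(t : ℚ_[p])‖ ≤ (p:ℝ)^(-(n:ℤ)) * 1 :=
            mul_le_mul_of_nonneg_left (htn t) (le_of_lt (zpow_pos ppos _))
        _ = (p:ℝ)^(-(n:ℤ)) := mul_one _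
    have hna : ‖a‖ ≤ (p:ℝ)^(-((n:ℤ) - i)) := by
      have h2 : (p:ℝ)^(-(i:ℤ)) * ‖a‖ ≤ (p:ℝ)^(-(n:ℤ)) := by
        rw [← norm_p_pow', ← norm_mul, ht', norm_mul, norm_p_pow']
        calc (p:ℝ)^(-(n:ℤ)) * ‖(t' : ℚ_[p])‖ ≤ (p:ℝ)^(-(n:ℤ)) * 1 :=
              mul_le_mul_of_nonneg_left (htn t') (le_of_lt (zpow_pos ppos _))
          _ = (p:ℝ)^(-(n:ℤ)) := mul_one _
      have h3 := mul_le_mul_of_nonneg_left h2 (le_of_lt (zpow_pos ppos (i:ℤ)))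
      calc ‖a‖ = (p:ℝ)^((i:ℤ)) * ((p:ℝ)^(-(i:ℤ)) * ‖a‖) := by
            rw [← mul_assoc, ← zpow_add₀ (ne_of_gt ppos), add_neg_cancel, zpow_zero, one_mul]
        _ ≤ (p:ℝ)^((i:ℤ)) * (p:ℝ)^(-(n:ℤ)) := h3
        _ = (p:ℝ)^(-((n:ℤ) - i)) := by
            rw [← zpow_add₀ (ne_of_gt ppos)]; ring_nf
    have hnb' : ‖b‖ ≤ (p:ℝ)^(-((n:ℤ) - i)) := by
      refine le_trans hnb ?_
      apply zpow_le_zpow_right₀ (le_of_lt hp1)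
      omega
    -- not both zero
    have hab : ¬ (a = 0 ∧ b = 0) := by
      rintro ⟨h0, h1⟩
      apply hγ0
      rw [decompL hb0 hb1 γ, ← ha, ← hb, h0, h1]
      simp
    obtain ⟨hN0, hN⟩ := key_norm hu hnsq a b hab
    rw [norm_formula hb0 hb1 hρ γ, ← ha, ← hb] at hval
    -- lower bound on valuation
    have hge : 2 * ((n:ℤ) - i) ≤ 3 * (n:ℤ) - i - j - k := by
      rw [← hval]
      apply val_ge_of_norm_le hN0
      rw [hN]
      calc (max ‖a‖ ‖b‖)^2 ≤ ((p:ℝ)^(-((n:ℤ) - i)))^2 := by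
            apply pow_le_pow_left₀ (le_max_iff.mpr (Or.inl (norm_nonneg a)))
            exact max_le hna hnb'
        _ = (p:ℝ)^(-(2 * ((n:ℤ) - i))) := by
            rw [← zpow_natCast ((p:ℝ)^(-((n:ℤ)-i))) 2, ← zpow_mul]; ring_nf
    -- parity
    have hpar : ∃ m : ℤ, 3 * (n:ℤ) - i - j - k = 2 * m := by
      rcases le_total ‖a‖ ‖b‖ with hle | hle
      · have hbne : b ≠ 0 := by
          intro h0
          exact hab ⟨norm_eq_zero.mp (le_antisymm (by simpa [h0] using hle)
            (norm_nonneg a)), h0⟩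
        refine ⟨b.valuation, ?_⟩
        rw [← hval]
        apply val_eq_of_norm hN0
        rw [hN, max_eq_right hle, Padic.norm_eq_zpow_neg_valuation hbne,
          ← zpow_natCast ((p:ℝ)^(-b.valuation)) 2, ← zpow_mul]
        ring_nf
      · have hane : a ≠ 0 := by
          intro h0
          exact hab ⟨h0, norm_eq_zero.mp (le_antisymm (by simpa [h0] using hle)
            (norm_nonneg b))⟩
        refine ⟨a.valuation, ?_⟩
        rw [← hval]
        apply val_eq_of_norm hN0
        rw [hN, max_eq_left hle, Padic.norm_eq_zpow_neg_valuation hane,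
          ← zpow_natCast ((p:ℝ)^(-a.valuation)) 2, ← zpow_mul]
        ring_nf
    obtain ⟨m, hm⟩ := hpar
    constructor
    · omega
    · omega
  · rintro ⟨hpar, hineq⟩
    obtain ⟨t, ht⟩ : ∃ t : ℕ, 3 * n = i + j + k + 2 * t ∧ n ≤ i + t := by
      refine ⟨(3 * n - i - j - k) / 2, ?_⟩
      omega
    set s := max t n with hsdef
    set γ : L := ((p:ℚ_[p])^t) • (1:L) + ((p:ℚ_[p])^s) • ρ with hγdef
    have hr0 : bL.repr γ 0 = (p:ℚ_[p])^t := repr_combo0_s15 hb0 hb1 _ _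
    have hr1 : bL.repr γ 1 = (p:ℚ_[p])^s := repr_combo1_s15 hb0 hb1 _ _
    have hpQ : ((p:ℚ_[p])) ≠ 0 := by
      exact_mod_cast (Fact.out : p.Prime).ne_zero
    refine ⟨γ, ?_, ?_, ?_⟩
    · intro h0
      rw [h0] at hr0
      simp at hr0
      exact pow_ne_zero t hpQ hr0.symm
    · intro x hx
      have hsub : Sm i * Sm j * Sm k ≤ Sm i := by
        have s1 : Sm i * Sm j ≤ Sm i := by
          rw [hSm i, hSm j]; exact span_mul_le hρ hij
        have s2 : Sm i * Sm k ≤ Sm i := by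
          rw [hSm i, hSm k]; exact span_mul_le hρ (hij.trans hjk)
        calc Sm i * Sm j * Sm k ≤ Sm i * Sm k := mul_le_mul' s1 (le_refl _)
          _ ≤ Sm i := s2
      have hx' : x ∈ Sm i := hsub hx
      rw [hSm, Submodule.mem_span_pair] at hx'
      obtain ⟨c, d, rfl⟩ := hx'
      rw [mul_add, mul_smul_comm, mul_smul_comm]
      apply Submodule.add_mem
      · apply Submodule.smul_mem
        rw [mul_one, hSm, mem_span_iff hb0 hb1]
        refine ⟨(p:ℤ_[p])^t, (p:ℤ_[p])^(s-n), ?_, ?_⟩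
        · rw [hr0]; push_cast; ring
        · rw [hr1]; push_cast
          rw [← pow_add]
          congr 1
          have : n ≤ s := le_max_right t n
          omega
      · apply Submodule.smul_mem
        have hmul : γ * ((p:L)^i * ρ)
            = ((p:ℚ_[p])^i * ((u:ℚ_[p]) * (p:ℚ_[p])^s)) • (1:L)
              + ((p:ℚ_[p])^i * (p:ℚ_[p])^t) • ρ := mul_rho_combo hρ _ _ i
        rw [hmul, hSm, mem_span_iff hb0 hb1]
        refine ⟨(p:ℤ_[p])^(i+s) * u, (p:ℤ_[p])^(i+t-n), ?_, ?_⟩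
        · rw [repr_combo0_s15 hb0 hb1]; push_cast; ring
        · rw [repr_combo1_s15 hb0 hb1]; push_cast
          rw [← pow_add, ← pow_add]
          congr 1
          have h1 : n ≤ i + t := ht.2
          omega
    · rw [norm_formula hb0 hb1 hρ γ, hr0, hr1]
      have hab : ¬ ((p:ℚ_[p])^t = 0 ∧ (p:ℚ_[p])^s = 0) := by
        rintro ⟨h0, -⟩; exact pow_ne_zero t hpQ h0
      obtain ⟨hN0, hN⟩ := key_norm hu hnsq _ _ hab
      have hts : t ≤ s := le_max_left t n
      have hmx : max ‖(p:ℚ_[p])^t‖ ‖(p:ℚ_[p])^s‖ = (p:ℝ)^(-(t:ℤ)) := by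
        rw [norm_p_pow', norm_p_pow', max_eq_left]
        apply zpow_le_zpow_right₀ (le_of_lt hp1)
        omega
      have : ((((p:ℚ_[p]))^t)^2 - (u:ℚ_[p]) * (((p:ℚ_[p]))^s)^2).valuation = 2 * (t:ℤ) := by
        apply val_eq_of_norm hN0
        rw [hN, hmx, ← zpow_natCast ((p:ℝ)^(-(t:ℤ))) 2, ← zpow_mul]
        ring_nf
      rw [this]
      omega
end
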